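/- Let 𝔅₄ be the braid group on four strands, given by the presentation ⟨σ₁, σ₂, σ₃ | σ₁σ₃ = σ₃σ₁, σ₁σ₂σ₁ = σ₂σ₁σ₂, σ₂σ₃σ₂ = σ₃σ₂σ₃⟩. Then 𝔅₄ is isomorphic to the presented group ⟨x, y, z | xz = zx, xyx = yx²y, yxzxy = zxyxz⟩, via the map sending σ₁ ↦ x, σ₂ ↦ yx, σ₃ ↦ zx (i.e., x = σ₁, y = σ₂σ₁⁻¹, z = σ₃σ₁⁻¹). -/

import Mathlib

/-!
STATEMENT 14: The braid group on four strands
`𝔅₄ = ⟨σ₁, σ₂, σ₃ | σ₁σ₃ = σ₃σ₁, σ₁σ₂σ₁ = σ₂σ₁σ₂, σ₂σ₃σ₂ = σ₃σ₂σ₃⟩`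
is isomorphic to `⟨x, y, z | xz = zx, xyx = yx²y, yxzxy = zxyxz⟩` via
`σ₁ ↦ x`, `σ₂ ↦ yx`, `σ₃ ↦ zx`.
-/

open FreeGroup

/-- The standard Artin relators of the braid group `𝔅₄`, with `σᵢ = of (i-1)`. -/
def braidRels : Set (FreeGroup (Fin 3)) :=
  {of 0 * of 2 * (of 2 * of 0)⁻¹,
    of 0 * of 1 * of 0 * (of 1 * of 0 * of 1)⁻¹,
    of 1 * of 2 * of 1 * (of 2 * of 1 * of 2)⁻¹}

/-- Relators of `⟨x, y, z | xz = zx, xyx = yx²y, yxzxy = zxyxz⟩`, with `x = of 0`,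
`y = of 1`, `z = of 2`. -/
def braidRels' : Set (FreeGroup (Fin 3)) :=
  {of 0 * of 2 * (of 2 * of 0)⁻¹,
    of 0 * of 1 * of 0 * (of 1 * of 0 ^ 2 * of 1)⁻¹,
    of 1 * of 0 * of 2 * of 0 * of 1 * (of 2 * of 0 * of 1 * of 0 * of 2)⁻¹}

lemma mk_rel_eq_one {α : Type*} {rels : Set (FreeGroup α)} {r : FreeGroup α} (h : r ∈ rels) :
    (PresentedGroup.mk rels r) = 1 := by
  have : r ∈ Subgroup.normalClosure rels := Subgroup.subset_normalClosure h
  exact (QuotientGroup.eq_one_iff r).mpr this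

-- relations in PresentedGroup braidRels'
lemma relA : (PresentedGroup.of 0 : PresentedGroup braidRels') * PresentedGroup.of 2 =
    PresentedGroup.of 2 * PresentedGroup.of 0 := by
  have := mk_rel_eq_one (rels := braidRels')
    (r := of 0 * of 2 * (of 2 * of 0)⁻¹) (by left; rfl)
  simp only [_root_.map_mul, _root_.map_inv] at this
  rw [mul_inv_eq_one] at this
  exact this

lemma relB : (PresentedGroup.of 0 : PresentedGroup braidRels') * PresentedGroup.of 1 *
    PresentedGroup.of 0 =
    PresentedGroup.of 1 * PresentedGroup.of 0 ^ 2 * PresentedGroup.of 1 := by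
  have := mk_rel_eq_one (rels := braidRels')
    (r := of 0 * of 1 * of 0 * (of 1 * of 0 ^ 2 * of 1)⁻¹) (by right; left; rfl)
  simp only [_root_.map_mul, _root_.map_inv, _root_.map_pow] at this
  rw [mul_inv_eq_one] at this
  exact this

lemma relC : (PresentedGroup.of 1 : PresentedGroup braidRels') * PresentedGroup.of 0 *
    PresentedGroup.of 2 * PresentedGroup.of 0 * PresentedGroup.of 1 =
    PresentedGroup.of 2 * PresentedGroup.of 0 * PresentedGroup.of 1 * PresentedGroup.of 0 *
    PresentedGroup.of 2 := by
  have := mk_rel_eq_one (rels := braidRels')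
    (r := of 1 * of 0 * of 2 * of 0 * of 1 * (of 2 * of 0 * of 1 * of 0 * of 2)⁻¹)
    (by right; right; rfl)
  simp only [_root_.map_mul, _root_.map_inv] at this
  rw [mul_inv_eq_one] at this
  exact this

-- relations in PresentedGroup braidRels
lemma relA' : (PresentedGroup.of 0 : PresentedGroup braidRels) * PresentedGroup.of 2 =
    PresentedGroup.of 2 * PresentedGroup.of 0 := by
  have := mk_rel_eq_one (rels := braidRels)
    (r := of 0 * of 2 * (of 2 * of 0)⁻¹) (by left; rfl)
  simp only [_root_.map_mul, _root_.map_inv] at this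
  rw [mul_inv_eq_one] at this
  exact this

lemma relB' : (PresentedGroup.of 0 : PresentedGroup braidRels) * PresentedGroup.of 1 *
    PresentedGroup.of 0 =
    PresentedGroup.of 1 * PresentedGroup.of 0 * PresentedGroup.of 1 := by
  have := mk_rel_eq_one (rels := braidRels)
    (r := of 0 * of 1 * of 0 * (of 1 * of 0 * of 1)⁻¹) (by right; left; rfl)
  simp only [_root_.map_mul, _root_.map_inv] at this
  rw [mul_inv_eq_one] at this
  exact this

lemma relC' : (PresentedGroup.of 1 : PresentedGroup braidRels) * PresentedGroup.of 2 *
    PresentedGroup.of 1 =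
    PresentedGroup.of 2 * PresentedGroup.of 1 * PresentedGroup.of 2 := by
  have := mk_rel_eq_one (rels := braidRels)
    (r := of 1 * of 2 * of 1 * (of 2 * of 1 * of 2)⁻¹) (by right; right; rfl)
  simp only [_root_.map_mul, _root_.map_inv] at this
  rw [mul_inv_eq_one] at this
  exact this

def fwdMap : Fin 3 → PresentedGroup braidRels' :=
  ![PresentedGroup.of 0, PresentedGroup.of 1 * PresentedGroup.of 0,
    PresentedGroup.of 2 * PresentedGroup.of 0]

def bwdMap : Fin 3 → PresentedGroup braidRels :=
  ![PresentedGroup.of 0, PresentedGroup.of 1 * (PresentedGroup.of 0)⁻¹,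
    PresentedGroup.of 2 * (PresentedGroup.of 0)⁻¹]

lemma fwd_rels : ∀ r ∈ braidRels, FreeGroup.lift fwdMap r = 1 := by
  intro r hr
  rcases hr with h | h | h <;> subst h <;>
    simp only [_root_.map_mul, _root_.map_inv, lift_apply_of, fwdMap, Matrix.cons_val_zero,
      Matrix.cons_val_one, Matrix.head_cons, Matrix.cons_val_two, Matrix.tail_cons,
      mul_inv_eq_one, ← mul_assoc]
  · rw [relA]
  · rw [relB, pow_two]; simp only [mul_assoc]
  · rw [relC]

lemma bwd_rels : ∀ r ∈ braidRels', FreeGroup.lift bwdMap r = 1 := by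
  intro r hr
  rcases hr with h | h | h <;> subst h <;>
    simp only [_root_.map_mul, _root_.map_inv, _root_.map_pow, lift_apply_of, bwdMap,
      Matrix.cons_val_zero, Matrix.cons_val_one, Matrix.head_cons, Matrix.cons_val_two,
      Matrix.tail_cons, mul_inv_eq_one, pow_two, ← mul_assoc, inv_mul_cancel_right]
  · rw [mul_inv_eq_iff_eq_mul]; exact relA'
  · rw [eq_mul_inv_iff_mul_eq]; exact relB'
  · rw [mul_left_inj]; exact relC'

theorem braid_group_four_presentation :
    ∃ e : PresentedGroup braidRels ≃* PresentedGroup braidRels',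
      e (PresentedGroup.of 0) = PresentedGroup.of 0 ∧
      e (PresentedGroup.of 1) = PresentedGroup.of 1 * PresentedGroup.of 0 ∧
      e (PresentedGroup.of 2) = PresentedGroup.of 2 * PresentedGroup.of 0 := by
  let F : PresentedGroup braidRels →* PresentedGroup braidRels' :=
    PresentedGroup.toGroup fwd_rels
  let G : PresentedGroup braidRels' →* PresentedGroup braidRels :=
    PresentedGroup.toGroup bwd_rels
  have hGF : G.comp F = MonoidHom.id _ := by
    apply PresentedGroup.ext
    intro x
    fin_cases x <;>
      simp [F, G, PresentedGroup.toGroup.of, fwdMap, bwdMap, mul_assoc]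
  have hFG : F.comp G = MonoidHom.id _ := by
    apply PresentedGroup.ext
    intro x
    fin_cases x <;>
      simp [F, G, PresentedGroup.toGroup.of, fwdMap, bwdMap, mul_assoc]
  refine ⟨F.toMulEquiv G hGF hFG, ?_, ?_, ?_⟩ <;>
    simp [F, MonoidHom.toMulEquiv, PresentedGroup.toGroup.of, fwdMap]
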